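/- Let d_k denote the determinant of the principal (k+1)×(k+1) minor of λI - A_M consisting of rows and columns 0,...,k. Then d_k = Σ_{ℓ=0}^{k+1} c_{k,ℓ} (∏_{j=1}^{ℓ} (M - k + ℓ - j)) p_{k-ℓ}(λ), where c_{k,ℓ} = ((-1)^ℓ/ℓ!) ((k+1)!/(k+1-ℓ)!)^2, p_m(λ) = ∏_{j=0}^{m} (λ - j(j+1)) for m ≥ 0, and p_{-1}(λ) = 1. -/

import Mathlib

open Finset

/-- The tridiagonal matrix `A_M` of size `(M+1) × (M+1)`. -/
noncomputable def A (M : ℕ) : Matrix (Fin (M+1)) (Fin (M+1)) ℝ := fun i j =>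
  if (i : ℕ) = (j : ℕ) then 2*(((i:ℕ):ℝ)+1)*((M:ℝ)+1-((i:ℕ):ℝ)) - M - 2
  else if (i : ℕ) + 1 = (j : ℕ) then
    ((j:ℕ):ℝ)*((((j:ℕ):ℝ)+1)*((M:ℝ)+2-((j:ℕ):ℝ)) - M - 2)
  else if (j : ℕ) + 1 = (i : ℕ) then (M:ℝ)+1-((i:ℕ):ℝ)
  else 0

/-- `d_k`: the determinant of the top-left `(k+1) × (k+1)` submatrix of `λ I - A_M`. -/
noncomputable def d (M k : ℕ) (h : k ≤ M) (lam : ℝ) : ℝ :=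
  Matrix.det ((lam • (1 : Matrix (Fin (M+1)) (Fin (M+1)) ℝ) - A M).submatrix
    (Fin.castLE (by omega : k + 1 ≤ M + 1)) (Fin.castLE (by omega : k + 1 ≤ M + 1)))

/-- `c_{k,ℓ} = ((-1)^ℓ/ℓ!) ((k+1)!/(k+1-ℓ)!)²` (here `0 ≤ ℓ ≤ k+1`). -/
noncomputable def c (k ℓ : ℕ) : ℝ :=
  (-1 : ℝ)^ℓ / (Nat.factorial ℓ) *
    ((Nat.factorial (k+1) : ℝ) / (Nat.factorial (k+1-ℓ)))^2

/-- `p_m(λ) = ∏_{j=0}^{m}(λ - j(j+1))`; here `P n = p_{n-1}`, so `P 0 = p_{-1} = 1`. -/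
noncomputable def P (n : ℕ) (lam : ℝ) : ℝ :=
  ∏ j ∈ Finset.range n, (lam - (j : ℝ) * ((j : ℝ) + 1))

def tri (f g e : ℕ → ℝ) (n : ℕ) : Matrix (Fin n) (Fin n) ℝ := fun i j =>
  if (i:ℕ) = (j:ℕ) then f i else if (i:ℕ)+1 = (j:ℕ) then g j
  else if (j:ℕ)+1 = (i:ℕ) then e i else 0

lemma tri_det_rec (f g e : ℕ → ℝ) (n : ℕ) :
    (tri f g e (n+2)).det =
      f (n+1) * (tri f g e (n+1)).det - g (n+1) * e (n+1) * (tri f g e n).det := by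
  rw [Matrix.det_succ_row _ (Fin.last (n+1))]
  rw [Fin.sum_univ_castSucc, Fin.sum_univ_castSucc]
  have h0 : ∀ j : Fin n, ((-1:ℝ) ^ (((Fin.last (n+1) : Fin (n+2)) : ℕ) + ((j.castSucc.castSucc : Fin (n+2)) : ℕ)) *
      tri f g e (n+2) (Fin.last (n+1)) j.castSucc.castSucc *
      ((tri f g e (n+2)).submatrix (Fin.last (n+1)).succAbove (j.castSucc.castSucc).succAbove).det) = 0 := by
    intro j
    have hj := j.isLt
    have hz : tri f g e (n+2) (Fin.last (n+1)) j.castSucc.castSucc = 0 := by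
      simp only [tri, Fin.val_last, Fin.coe_castSucc]
      have h1 : ¬ (n+1 = (j:ℕ)) := by omega
      have h2 : ¬ (n+1+1 = (j:ℕ)) := by omega
      have h3 : ¬ ((j:ℕ)+1 = n+1) := by omega
      simp [h1, h2, h3]
      exact fun hc => absurd hc (by omega)
    rw [hz]; ring
  rw [Finset.sum_eq_zero (fun j _ => h0 j), zero_add]
  -- remaining: term at j = castSucc last and j = last
  have hminor1 : ((tri f g e (n+2)).submatrix (Fin.last (n+1)).succAbove
      (Fin.last (n+1)).succAbove).det = (tri f g e (n+1)).det := by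
    congr 1
    ext i j
    simp [tri, Matrix.submatrix, Fin.succAbove_last]
  have hentry1 : tri f g e (n+2) (Fin.last (n+1)) (Fin.last (n+1)) = f (n+1) := by
    simp [tri]
  have hentry2 : tri f g e (n+2) (Fin.last (n+1)) ((Fin.last n).castSucc) = e (n+1) := by
    simp only [tri, Fin.val_last, Fin.coe_castSucc]
    have h1 : ¬ (n+1 = n) := by omega
    have h2 : ¬ (n+1+1 = n) := by omega
    simp [h1, h2]
  -- now the second minor
  have hminor2 : ((tri f g e (n+2)).submatrix (Fin.last (n+1)).succAbove
      ((Fin.last n).castSucc : Fin (n+2)).succAbove).det = g (n+1) * (tri f g e n).det := by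
    set M' := (tri f g e (n+2)).submatrix (Fin.last (n+1)).succAbove
      ((Fin.last n).castSucc : Fin (n+2)).succAbove with hM'
    rw [Matrix.det_succ_column M' (Fin.last n)]
    rw [Fin.sum_univ_castSucc]
    have hcol : ∀ i : Fin n, M' i.castSucc (Fin.last n) = 0 := by
      intro i
      have hi := i.isLt
      simp only [hM', Matrix.submatrix_apply, Fin.succAbove_last]
      have harg : (((Fin.last n).castSucc : Fin (n+2)).succAbove (Fin.last n) : ℕ) = n+1 := by
        simp [Fin.succAbove, Fin.lt_def]
      simp only [tri, Fin.coe_castSucc, harg]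
      have h1 : ¬ ((i:ℕ) = n+1) := by omega
      have h2 : ¬ ((i:ℕ)+1 = n+1) := by omega
      have h3 : ¬ (n+1+1 = (i:ℕ)) := by omega
      simp [h1, h2, h3]
      exact fun hc => absurd hc (by omega)
    have hzero : ∀ i : Fin n, ((-1:ℝ) ^ (((i.castSucc : Fin (n+1)) : ℕ) + ((Fin.last n : Fin (n+1)) : ℕ)) *
        M' i.castSucc (Fin.last n) * (M'.submatrix (i.castSucc).succAbove (Fin.last n).succAbove).det) = 0 := by
      intro i; rw [hcol i]; ring
    rw [Finset.sum_eq_zero (fun i _ => hzero i), zero_add]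
    have hlast : M' (Fin.last n) (Fin.last n) = g (n+1) := by
      simp only [hM', Matrix.submatrix_apply, Fin.succAbove_last]
      have harg : (((Fin.last n).castSucc : Fin (n+2)).succAbove (Fin.last n) : ℕ) = n+1 := by
        simp [Fin.succAbove, Fin.lt_def]
      have hrow : ((Fin.last n).castSucc : Fin (n+2)) = (Fin.last n).castSucc := rfl
      have : tri f g e (n+2) ((Fin.last n).castSucc) (((Fin.last n).castSucc : Fin (n+2)).succAbove (Fin.last n)) = g (n+1) := by
        simp only [tri, Fin.coe_castSucc, Fin.val_last, harg]
        have h1 : ¬ ((n:ℕ) = n+1) := by omega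
        simp [h1]
      exact this
    have hmm : (M'.submatrix (Fin.last n).succAbove (Fin.last n).succAbove).det = (tri f g e n).det := by
      congr 1
      ext i j
      have hi := i.isLt; have hj := j.isLt
      simp only [hM', Matrix.submatrix_apply, Fin.succAbove_last]
      have hcolarg : ((((Fin.last n).castSucc : Fin (n+2)).succAbove (j.castSucc)) : ℕ) = (j:ℕ) := by
        simp [Fin.succAbove, Fin.lt_def, hj]
      simp [tri, hcolarg]
    rw [hlast, hmm]
    have hpow : ((-1:ℝ)) ^ (((Fin.last n : Fin (n+1)) : ℕ) + ((Fin.last n : Fin (n+1)) : ℕ)) = 1 :=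
      Even.neg_one_pow ⟨n, by simp [Fin.val_last]⟩
    rw [hpow]; ring
  rw [hminor1, hminor2, hentry1, hentry2]
  have hp1 : ((-1:ℝ)) ^ (((Fin.last (n+1) : Fin (n+2)) : ℕ) + ((Fin.last (n+1) : Fin (n+2)) : ℕ)) = 1 :=
    Even.neg_one_pow ⟨n+1, by simp [Fin.val_last]⟩
  have hp2 : ((-1:ℝ)) ^ (((Fin.last (n+1) : Fin (n+2)) : ℕ) + (((Fin.last n).castSucc : Fin (n+2)) : ℕ)) = -1 := by
    have : ((Fin.last (n+1) : Fin (n+2)) : ℕ) + (((Fin.last n).castSucc : Fin (n+2)) : ℕ) = 2*n+1 := by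
      simp [Fin.val_last, Fin.coe_castSucc]; ring
    rw [this]
    exact Odd.neg_one_pow ⟨n, rfl⟩
  rw [hp1, hp2]; ring

noncomputable def cont (f g e : ℕ → ℝ) : ℕ → ℝ
  | 0 => 1
  | 1 => f 0
  | (n+2) => f (n+1) * cont f g e (n+1) - g (n+1) * e (n+1) * cont f g e n

lemma tri_det (f g e : ℕ → ℝ) : ∀ n, (tri f g e n).det = cont f g e n := by
  intro n
  induction n using Nat.twoStepInduction with
  | zero => simp [cont, Matrix.det_fin_zero]
  | one => simp [cont, Matrix.det_fin_one, tri]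
  | more n ih1 ih2 => rw [tri_det_rec, ih1, ih2]; rfl

noncomputable def fa (M : ℕ) (lam : ℝ) (i : ℕ) : ℝ :=
  lam - (2*((i:ℝ)+1)*((M:ℝ)+1-(i:ℝ)) - M - 2)
noncomputable def ga (M : ℕ) (j : ℕ) : ℝ :=
  -((j:ℝ)*(((j:ℝ)+1)*((M:ℝ)+2-(j:ℝ)) - M - 2))
noncomputable def ea (M : ℕ) (i : ℕ) : ℝ := -((M:ℝ)+1-(i:ℝ))

lemma sub_eq (M k : ℕ) (lam : ℝ) (h : k+1 ≤ M+1) :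
    ((lam • (1 : Matrix (Fin (M+1)) (Fin (M+1)) ℝ) - A M).submatrix
      (Fin.castLE h) (Fin.castLE h)) = tri (fa M lam) (ga M) (ea M) (k+1) := by
  ext i j
  simp only [Matrix.submatrix_apply, Matrix.sub_apply, Matrix.smul_apply, Matrix.one_apply,
    A, tri, Fin.coe_castLE, fa, ga, ea, smul_eq_mul]
  have hcast : (Fin.castLE h i = Fin.castLE h j) ↔ ((i:ℕ) = (j:ℕ)) := by
    rw [Fin.ext_iff]; simp
  rw [if_congr hcast rfl rfl]
  split_ifs with h1 h2 h3 <;> ring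

noncomputable def co (M k ℓ : ℕ) : ℝ :=
  (-1:ℝ)^ℓ / (Nat.factorial ℓ) * (∏ i ∈ Finset.range ℓ, ((k:ℝ)+1-(i:ℝ)))^2 *
    ∏ i ∈ Finset.range ℓ, ((M:ℝ)-(k:ℝ)+(i:ℝ))

noncomputable def S (M k : ℕ) (lam : ℝ) : ℝ :=
  ∑ ℓ ∈ Finset.range (k+2), co M k ℓ * P (k+1-ℓ) lam

noncomputable def bet (M k : ℕ) (ℓ : ℕ) : ℝ :=
  ((k:ℝ)+2-(ℓ:ℝ))*((k:ℝ)+3-(ℓ:ℝ)) - (2*((k:ℝ)+3)*((M:ℝ)-(k:ℝ)-1) - (M:ℝ) - 2)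

lemma prodA (x : ℝ) (ℓ : ℕ) :
    ∏ i ∈ Finset.range (ℓ+1), (x-(i:ℝ)) = x * ∏ i ∈ Finset.range ℓ, (x-1-(i:ℝ)) := by
  rw [Finset.prod_range_succ']
  rw [Finset.prod_congr rfl (fun i _ => (by push_cast; ring : x-((i+1:ℕ):ℝ) = x-1-(i:ℝ)))]
  push_cast; ring

lemma prodB (x : ℝ) (ℓ : ℕ) :
    ∏ i ∈ Finset.range (ℓ+1), (x+(i:ℝ)) = x * ∏ i ∈ Finset.range ℓ, (x+1+(i:ℝ)) := by
  rw [Finset.prod_range_succ']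
  rw [Finset.prod_congr rfl (fun i _ => (by push_cast; ring : x+((i+1:ℕ):ℝ) = x+1+(i:ℝ)))]
  push_cast; ring

lemma co_zero (M k : ℕ) : co M k 0 = 1 := by simp [co]

lemma coI (M k m : ℕ) :
    co M (k+2) (m+2) = co M (k+1) (m+2) + co M (k+1) (m+1) * bet M k (m+1)
      - ga M (k+2) * ea M (k+2) * co M k m := by
  set t1 : ℝ := ∏ i ∈ Finset.range m, ((k:ℝ)+1-(i:ℝ)) with ht1
  set t2 : ℝ := ∏ i ∈ Finset.range m, ((M:ℝ)-(k:ℝ)+(i:ℝ)) with ht2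
  have hF : (Nat.factorial (m+2) : ℝ) = ((m:ℝ)+2)*((m:ℝ)+1)*(Nat.factorial m : ℝ) := by
    rw [Nat.factorial_succ, Nat.factorial_succ]; push_cast; ring
  have hF1 : (Nat.factorial (m+1) : ℝ) = ((m:ℝ)+1)*(Nat.factorial m : ℝ) := by
    rw [Nat.factorial_succ]; push_cast; ring
  have hFne : (Nat.factorial m : ℝ) ≠ 0 := by
    exact_mod_cast Nat.factorial_ne_zero m
  have hm1 : ((m:ℝ)+1) ≠ 0 := by positivity
  have hm2 : ((m:ℝ)+2) ≠ 0 := by positivity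
  -- products for co M (k+2) (m+2)
  have pA : ∏ i ∈ Finset.range (m+2), (((k+2:ℕ):ℝ)+1-(i:ℝ))
      = ((k:ℝ)+3)*(((k:ℝ)+2)*t1) := by
    have e1 : ∏ i ∈ Finset.range (m+2), (((k+2:ℕ):ℝ)+1-(i:ℝ))
        = ∏ i ∈ Finset.range (m+2), (((k:ℝ)+3)-(i:ℝ)) :=
      Finset.prod_congr rfl (fun i _ => by push_cast; ring)
    have e2 : ∏ i ∈ Finset.range m, (((k:ℝ)+3)-1-1-(i:ℝ))
        = ∏ i ∈ Finset.range m, ((k:ℝ)+1-(i:ℝ)) :=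
      Finset.prod_congr rfl (fun i _ => by ring)
    rw [e1, prodA, prodA, e2, ht1]
    ring
  have pB : ∏ i ∈ Finset.range (m+2), ((M:ℝ)-((k+2:ℕ):ℝ)+(i:ℝ))
      = ((M:ℝ)-(k:ℝ)-2)*(((M:ℝ)-(k:ℝ)-1)*t2) := by
    have e1 : ∏ i ∈ Finset.range (m+2), ((M:ℝ)-((k+2:ℕ):ℝ)+(i:ℝ))
        = ∏ i ∈ Finset.range (m+2), (((M:ℝ)-(k:ℝ)-2)+(i:ℝ)) :=
      Finset.prod_congr rfl (fun i _ => by push_cast; ring)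
    have e2 : ∏ i ∈ Finset.range m, (((M:ℝ)-(k:ℝ)-2)+1+1+(i:ℝ))
        = ∏ i ∈ Finset.range m, ((M:ℝ)-(k:ℝ)+(i:ℝ)) :=
      Finset.prod_congr rfl (fun i _ => by ring)
    rw [e1, prodB, prodB, e2, ht2]
    ring
  -- products for co M (k+1) (m+2)
  have pC : ∏ i ∈ Finset.range (m+2), (((k+1:ℕ):ℝ)+1-(i:ℝ))
      = ((k:ℝ)+2)*(t1*((k:ℝ)+1-(m:ℝ))) := by
    have e1 : ∏ i ∈ Finset.range (m+2), (((k+1:ℕ):ℝ)+1-(i:ℝ))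
        = ∏ i ∈ Finset.range (m+2), (((k:ℝ)+2)-(i:ℝ)) :=
      Finset.prod_congr rfl (fun i _ => by push_cast; ring)
    have e2 : ∏ i ∈ Finset.range (m+1), (((k:ℝ)+2)-1-(i:ℝ))
        = ∏ i ∈ Finset.range (m+1), ((k:ℝ)+1-(i:ℝ)) :=
      Finset.prod_congr rfl (fun i _ => by ring)
    rw [e1, prodA, e2, Finset.prod_range_succ, ht1]
  have pD : ∏ i ∈ Finset.range (m+2), ((M:ℝ)-((k+1:ℕ):ℝ)+(i:ℝ))
      = ((M:ℝ)-(k:ℝ)-1)*(t2*((M:ℝ)-(k:ℝ)+(m:ℝ))) := by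
    have e1 : ∏ i ∈ Finset.range (m+2), ((M:ℝ)-((k+1:ℕ):ℝ)+(i:ℝ))
        = ∏ i ∈ Finset.range (m+2), (((M:ℝ)-(k:ℝ)-1)+(i:ℝ)) :=
      Finset.prod_congr rfl (fun i _ => by push_cast; ring)
    have e2 : ∏ i ∈ Finset.range (m+1), (((M:ℝ)-(k:ℝ)-1)+1+(i:ℝ))
        = ∏ i ∈ Finset.range (m+1), ((M:ℝ)-(k:ℝ)+(i:ℝ)) :=
      Finset.prod_congr rfl (fun i _ => by ring)
    rw [e1, prodB, e2, Finset.prod_range_succ, ht2]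
  -- products for co M (k+1) (m+1)
  have pE : ∏ i ∈ Finset.range (m+1), (((k+1:ℕ):ℝ)+1-(i:ℝ)) = ((k:ℝ)+2)*t1 := by
    have e1 : ∏ i ∈ Finset.range (m+1), (((k+1:ℕ):ℝ)+1-(i:ℝ))
        = ∏ i ∈ Finset.range (m+1), (((k:ℝ)+2)-(i:ℝ)) :=
      Finset.prod_congr rfl (fun i _ => by push_cast; ring)
    have e2 : ∏ i ∈ Finset.range m, (((k:ℝ)+2)-1-(i:ℝ))
        = ∏ i ∈ Finset.range m, ((k:ℝ)+1-(i:ℝ)) :=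
      Finset.prod_congr rfl (fun i _ => by ring)
    rw [e1, prodA, e2, ht1]
  have pF : ∏ i ∈ Finset.range (m+1), ((M:ℝ)-((k+1:ℕ):ℝ)+(i:ℝ)) = ((M:ℝ)-(k:ℝ)-1)*t2 := by
    have e1 : ∏ i ∈ Finset.range (m+1), ((M:ℝ)-((k+1:ℕ):ℝ)+(i:ℝ))
        = ∏ i ∈ Finset.range (m+1), (((M:ℝ)-(k:ℝ)-1)+(i:ℝ)) :=
      Finset.prod_congr rfl (fun i _ => by push_cast; ring)
    have e2 : ∏ i ∈ Finset.range m, (((M:ℝ)-(k:ℝ)-1)+1+(i:ℝ))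
        = ∏ i ∈ Finset.range m, ((M:ℝ)-(k:ℝ)+(i:ℝ)) :=
      Finset.prod_congr rfl (fun i _ => by ring)
    rw [e1, prodB, e2, ht2]
  simp only [co, pA, pB, pC, pD, pE, pF, hF, hF1, bet, ga, ea]
  rw [pow_succ, pow_succ, pow_succ]
  push_cast
  field_simp
  ring
lemma coII (M k : ℕ) : co M (k+2) 1 = co M (k+1) 1 + co M (k+1) 0 * bet M k 0 := by
  simp only [co, Finset.prod_range_one, Finset.prod_range_zero, bet, pow_one, pow_zero,
    Nat.factorial_one, Nat.factorial_zero, Nat.cast_zero]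
  push_cast
  ring

lemma co_top (M k : ℕ) : co M (k+1) (k+3) = 0 := by
  have hz : ∏ i ∈ Finset.range (k+3), (((k+1:ℕ):ℝ)+1-(i:ℝ)) = 0 := by
    apply Finset.prod_eq_zero (Finset.self_mem_range_succ (k+2))
    push_cast; ring
  simp only [co]
  rw [hz]
  ring

lemma S_rec (M k : ℕ) (lam : ℝ) :
    S M (k+2) lam = fa M lam (k+2) * S M (k+1) lam - ga M (k+2) * ea M (k+2) * S M k lam := by
  have hfa : ∀ ℓ ∈ Finset.range (k+3),
      fa M lam (k+2) * (co M (k+1) ℓ * P (k+2-ℓ) lam)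
        = co M (k+1) ℓ * P (k+3-ℓ) lam + co M (k+1) ℓ * bet M k ℓ * P (k+2-ℓ) lam := by
    intro ℓ hℓ
    rw [Finset.mem_range] at hℓ
    have hle : ℓ ≤ k+2 := by omega
    have hidx : k+3-ℓ = (k+2-ℓ)+1 := by omega
    have hP : P ((k+2-ℓ)+1) lam
        = P (k+2-ℓ) lam * (lam - ((k+2-ℓ:ℕ):ℝ)*(((k+2-ℓ:ℕ):ℝ)+1)) := by
      simp [P, Finset.prod_range_succ]
    have hc : ((k+2-ℓ:ℕ):ℝ) = (k:ℝ)+2-(ℓ:ℝ) := by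
      push_cast [hle]; ring
    rw [hidx, hP, hc]
    simp only [fa, bet]
    push_cast
    ring
  have h1 : fa M lam (k+2) * S M (k+1) lam
      = (∑ ℓ ∈ Finset.range (k+3), co M (k+1) ℓ * P (k+3-ℓ) lam)
        + ∑ ℓ ∈ Finset.range (k+3), co M (k+1) ℓ * bet M k ℓ * P (k+2-ℓ) lam := by
    rw [S, Finset.mul_sum, ← Finset.sum_add_distrib]
    exact Finset.sum_congr rfl hfa
  have h2a : (∑ ℓ ∈ Finset.range (k+3), co M (k+1) ℓ * P (k+3-ℓ) lam)
      = (∑ ℓ ∈ Finset.range (k+2), co M (k+1) (ℓ+1) * P (k+2-ℓ) lam)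
        + co M (k+1) 0 * P (k+3) lam := by
    rw [Finset.sum_range_succ']
    congr 1
    apply Finset.sum_congr rfl
    intro ℓ hℓ
    have hx : k+3-(ℓ+1) = k+2-ℓ := by omega
    rw [hx]
  have h2b : (∑ ℓ ∈ Finset.range (k+3), co M (k+1) (ℓ+1) * P (k+2-ℓ) lam)
      = ∑ ℓ ∈ Finset.range (k+2), co M (k+1) (ℓ+1) * P (k+2-ℓ) lam := by
    rw [Finset.sum_range_succ]
    have hz : co M (k+1) (k+2+1) = 0 := co_top M k
    rw [hz]
    ring
  have h2 : (∑ ℓ ∈ Finset.range (k+3), co M (k+1) ℓ * P (k+3-ℓ) lam)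
      = (∑ ℓ ∈ Finset.range (k+3), co M (k+1) (ℓ+1) * P (k+2-ℓ) lam)
        + co M (k+1) 0 * P (k+3) lam := by
    rw [h2b]; exact h2a
  have h3 : ga M (k+2) * ea M (k+2) * S M k lam
      = ∑ ℓ ∈ Finset.range (k+3),
          (if ℓ = 0 then 0 else ga M (k+2) * ea M (k+2) * co M k (ℓ-1) * P (k+2-ℓ) lam) := by
    rw [Finset.sum_range_succ']
    rw [if_pos rfl, add_zero, S, Finset.mul_sum]
    apply Finset.sum_congr rfl
    intro ℓ _
    rw [if_neg (Nat.succ_ne_zero ℓ)]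
    have hx1 : ℓ+1-1 = ℓ := rfl
    have hx2 : k+2-(ℓ+1) = k+1-ℓ := by omega
    rw [hx1, hx2]
    ring
  have h4 : S M (k+2) lam
      = (∑ ℓ ∈ Finset.range (k+3), co M (k+2) (ℓ+1) * P (k+2-ℓ) lam)
        + co M (k+2) 0 * P (k+3) lam := by
    rw [S, Finset.sum_range_succ']
    congr 1
    apply Finset.sum_congr rfl
    intro ℓ hℓ
    have hx : k+3-(ℓ+1) = k+2-ℓ := by omega
    rw [hx]
  have hterm : ∀ ℓ ∈ Finset.range (k+3),
      co M (k+2) (ℓ+1) * P (k+2-ℓ) lam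
        = (co M (k+1) (ℓ+1) * P (k+2-ℓ) lam + co M (k+1) ℓ * bet M k ℓ * P (k+2-ℓ) lam)
          - (if ℓ = 0 then 0 else ga M (k+2) * ea M (k+2) * co M k (ℓ-1) * P (k+2-ℓ) lam) := by
    intro ℓ _
    match ℓ with
    | 0 =>
      rw [if_pos rfl, sub_zero, coII]
      ring
    | (m+1) =>
      rw [if_neg (Nat.succ_ne_zero m)]
      have hx1 : m+1-1 = m := rfl
      have hx2 : k+2-(m+1) = k+1-m := by omega
      rw [hx1, hx2, coI]
      ring
  have hsum : ∑ ℓ ∈ Finset.range (k+3), co M (k+2) (ℓ+1) * P (k+2-ℓ) lam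
      = (∑ ℓ ∈ Finset.range (k+3), co M (k+1) (ℓ+1) * P (k+2-ℓ) lam)
        + (∑ ℓ ∈ Finset.range (k+3), co M (k+1) ℓ * bet M k ℓ * P (k+2-ℓ) lam)
        - ∑ ℓ ∈ Finset.range (k+3),
            (if ℓ = 0 then 0 else ga M (k+2) * ea M (k+2) * co M k (ℓ-1) * P (k+2-ℓ) lam) := by
    rw [← Finset.sum_add_distrib, ← Finset.sum_sub_distrib]
    exact Finset.sum_congr rfl hterm
  rw [h4, h1, h2, h3, hsum, co_zero, co_zero]
  ring

lemma cont_eq_S (M : ℕ) (lam : ℝ) :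
    ∀ k, cont (fa M lam) (ga M) (ea M) (k+1) = S M k lam := by
  intro k
  induction k using Nat.twoStepInduction with
  | zero =>
    simp only [cont, S, Finset.sum_range_succ, Finset.sum_range_zero, co, P,
      Finset.prod_range_succ, Finset.prod_range_zero, Finset.prod_range_one, fa]
    push_cast
    norm_num
    ring
  | one =>
    show fa M lam 1 * cont (fa M lam) (ga M) (ea M) 1
        - ga M 1 * ea M 1 * cont (fa M lam) (ga M) (ea M) 0 = S M 1 lam
    simp only [cont, S, Finset.sum_range_succ, Finset.sum_range_zero, co, P,
      Finset.prod_range_succ, Finset.prod_range_zero, Finset.prod_range_one, fa, ga, ea]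
    push_cast
    norm_num
    ring
  | more n ih1 ih2 =>
    show fa M lam (n+2) * cont (fa M lam) (ga M) (ea M) (n+2)
        - ga M (n+2) * ea M (n+2) * cont (fa M lam) (ga M) (ea M) (n+1) = S M (n+2) lam
    rw [ih2, ih1, S_rec]

lemma desc_prod (M k : ℕ) : ∀ ℓ, ℓ ≤ k+1 →
    (((k+1).descFactorial ℓ : ℕ) : ℝ) = ∏ i ∈ Finset.range ℓ, ((k:ℝ)+1-(i:ℝ)) := by
  intro ℓ
  induction ℓ with
  | zero => simp
  | succ m ih =>
    intro hm
    have hm' : m ≤ k := by omega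
    rw [Nat.descFactorial_succ, Finset.prod_range_succ, ← ih (by omega)]
    have : ((k+1-m:ℕ):ℝ) = (k:ℝ)+1-(m:ℝ) := by
      push_cast [Nat.cast_sub (by omega : m ≤ k+1)]; ring
    push_cast [this]
    ring

lemma c_eq_co (M k ℓ : ℕ) (h1 : ℓ ≤ k+1) :
    c k ℓ * (∏ j ∈ Finset.Icc 1 ℓ, ((M : ℝ) - (k : ℝ) + (ℓ : ℝ) - (j : ℝ))) = co M k ℓ := by
  have hfac : ((Nat.factorial (k+1) : ℕ) : ℝ) / ((Nat.factorial (k+1-ℓ) : ℕ) : ℝ)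
      = (((k+1).descFactorial ℓ : ℕ) : ℝ) := by
    have hne : ((Nat.factorial (k+1-ℓ) : ℕ) : ℝ) ≠ 0 := by
      exact_mod_cast Nat.factorial_ne_zero (k+1-ℓ)
    rw [div_eq_iff hne]
    rw [← Nat.cast_mul]
    congr 1
    rw [mul_comm]
    exact (Nat.factorial_mul_descFactorial h1).symm
  have hicc : (∏ j ∈ Finset.Icc 1 ℓ, ((M : ℝ) - (k : ℝ) + (ℓ : ℝ) - (j : ℝ)))
      = ∏ i ∈ Finset.range ℓ, ((M:ℝ)-(k:ℝ)+(i:ℝ)) := by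
    rw [← Finset.Ico_add_one_right_eq_Icc, Finset.prod_Ico_eq_prod_range]
    have e1 : ∀ i ∈ Finset.range (ℓ+1-1),
        ((M : ℝ) - (k : ℝ) + (ℓ : ℝ) - ((1+i : ℕ) : ℝ))
          = ((M:ℝ)-(k:ℝ)+((ℓ-1-i : ℕ):ℝ)) := by
      intro i hi
      rw [Finset.mem_range] at hi
      push_cast [Nat.cast_sub (by omega : i ≤ ℓ-1), Nat.cast_sub (by omega : 1 ≤ ℓ)]
      ring
    rw [Finset.prod_congr rfl e1]
    have := Finset.prod_range_reflect (fun i => ((M:ℝ)-(k:ℝ)+(i:ℝ))) ℓ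
    have hsz : ℓ+1-1 = ℓ := by omega
    rw [hsz]
    exact this
  rw [hicc, c, hfac, desc_prod M k ℓ h1, co]

/-- `d_k = Σ_{ℓ=0}^{k+1} c_{k,ℓ} (∏_{j=1}^{ℓ} (M - k + ℓ - j)) p_{k-ℓ}(λ)`. -/
theorem minor_det_formula (M k : ℕ) (h : k ≤ M) (lam : ℝ) :
    d M k h lam = ∑ ℓ ∈ Finset.range (k+2),
      c k ℓ * (∏ j ∈ Finset.Icc 1 ℓ, ((M : ℝ) - (k : ℝ) + (ℓ : ℝ) - (j : ℝ)))
        * P (k+1-ℓ) lam := by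
  have hd : d M k h lam = (tri (fa M lam) (ga M) (ea M) (k+1)).det := by
    unfold d
    rw [sub_eq M k lam (by omega)]
  rw [hd, tri_det, cont_eq_S]
  unfold S
  apply Finset.sum_congr rfl
  intro ℓ hℓ
  rw [Finset.mem_range] at hℓ
  rw [c_eq_co M k ℓ (by omega)]
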